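/- Let (C, Ω) be a category with V-face. Then the coend C(Ω), with its coalgebra structure and its E-bimodule structure coming from the coend in Bmd(E), is a V-dressed coalgebra. -/

import Mathlib

open TensorProduct


section Dressed

variable (K : Type) [Field K] (V : Type) [Fintype V] [DecidableEq V]

/-- An `E`-bimodule structure on a `K`-vector space, where `E = R̊ ⊗ R` is the
span of the orthogonal idempotents `λ̊μ` (indexed by `V × V`): commuting unital
left and right actions, encoded by the action operators of the idempotents. -/
structure EBim (C : Type) [AddCommGroup C] [Module K C] where
  /-- left action of the idempotent `λ̊μ` -/
  eL : V × V → C →ₗ[K] C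
  /-- right action of the idempotent `λ̊μ` -/
  eR : V × V → C →ₗ[K] C
  eL_orth : ∀ p q : V × V, eL p ∘ₗ eL q = if p = q then eL p else 0
  eR_orth : ∀ p q : V × V, eR p ∘ₗ eR q = if p = q then eR p else 0
  eLR_comm : ∀ p q : V × V, eL p ∘ₗ eR q = eR q ∘ₗ eL p
  sum_eL : ∑ p : V × V, eL p = LinearMap.id
  sum_eR : ∑ p : V × V, eR p = LinearMap.id

namespace EBim

variable {K V} {C : Type} [AddCommGroup C] [Module K C]

/-- left action of `λ̊` -/
def oL (B : EBim K V C) (l : V) : C →ₗ[K] C := ∑ m : V, B.eL (l, m)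

/-- left action of the "plain" element `μ` -/
def pL (B : EBim K V C) (m : V) : C →ₗ[K] C := ∑ l : V, B.eL (l, m)

/-- right action of `λ̊` -/
def oR (B : EBim K V C) (l : V) : C →ₗ[K] C := ∑ m : V, B.eR (l, m)

/-- right action of the "plain" element `μ` -/
def pR (B : EBim K V C) (m : V) : C →ₗ[K] C := ∑ l : V, B.eR (l, m)

end EBim

/-- A `V`-dressed coalgebra: a `K`-coalgebra with an `E`-bimodule structure
satisfying the compatibilities (9)–(11) of Hayashi's paper. -/
structure DressedStruct (C : Type) [AddCommGroup C] [Module K C]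
    extends EBim K V C where
  comul : C →ₗ[K] C ⊗[K] C
  counit : C →ₗ[K] K
  coassoc : ∀ c : C,
    (TensorProduct.assoc K C C C) ((TensorProduct.map comul LinearMap.id) (comul c)) =
      (TensorProduct.map LinearMap.id comul) (comul c)
  counit_comul : ∀ c : C,
    (TensorProduct.lid K C) ((TensorProduct.map counit LinearMap.id) (comul c)) = c
  comul_counit : ∀ c : C,
    (TensorProduct.rid K C) ((TensorProduct.map LinearMap.id counit) (comul c)) = c
  /-- `Δ(λ̊μ c λ̊'μ') = Σ λ̊ c₍₁₎ λ̊' ⊗ μ c₍₂₎ μ'` -/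
  comul_act : ∀ (p q : V × V) (c : C),
    comul (eL p (eR q c)) =
      (TensorProduct.map (toEBim.oL p.1 ∘ₗ toEBim.oR q.1)
        (toEBim.pL p.2 ∘ₗ toEBim.pR q.2)) (comul c)
  /-- `Σ λ c₍₁₎ μ ⊗ c₍₂₎ = Σ c₍₁₎ ⊗ λ̊ c₍₂₎ μ̊` -/
  exch : ∀ (l m : V) (c : C),
    (TensorProduct.map (toEBim.pL l ∘ₗ toEBim.pR m) LinearMap.id) (comul c) =
      (TensorProduct.map LinearMap.id (toEBim.oL l ∘ₗ toEBim.oR m)) (comul c)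
  /-- `ε(λ̊ c μ̊) = ε(λ c μ)` -/
  counit_act : ∀ (l m : V) (c : C),
    counit (toEBim.oL l (toEBim.oR m c)) = counit (toEBim.pL l (toEBim.pR m c))

/-- `f` is a map of `V`-dressed coalgebras (a coalgebra map which is also an
`E`-bimodule map). -/
def IsDrMap {C D : Type} [AddCommGroup C] [Module K C] [AddCommGroup D] [Module K D]
    (DC : DressedStruct K V C) (DD : DressedStruct K V D) (f : C →ₗ[K] D) : Prop :=
  (∀ c : C, DD.comul (f c) = (TensorProduct.map f f) (DC.comul c)) ∧
  (∀ c : C, DD.counit (f c) = DC.counit c) ∧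
  (∀ (p : V × V) (c : C), f (DC.eL p c) = DD.eL p (f c)) ∧
  (∀ (p : V × V) (c : C), f (DC.eR p c) = DD.eR p (f c))

/-- The subspace of `C ⊗[K] D` by which one divides to obtain the tensor
product `C ⊗_E D` of `E`-bimodules. -/
noncomputable def dbal {C D : Type} [AddCommGroup C] [Module K C]
    [AddCommGroup D] [Module K D] (A : EBim K V C) (B : EBim K V D) :
    Submodule K (C ⊗[K] D) :=
  Submodule.span K {z | ∃ (p : V × V) (c : C) (d : D),
    z = (A.eR p c) ⊗ₜ[K] d - c ⊗ₜ[K] (B.eL p d)}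

/-- The underlying vector space of `C ⊗_E D`. -/
noncomputable abbrev DTensor {C D : Type} [AddCommGroup C] [Module K C]
    [AddCommGroup D] [Module K D] (A : EBim K V C) (B : EBim K V D) : Type :=
  (C ⊗[K] D) ⧸ dbal K V A B

/-- The defining formulas for the `V`-dressed coalgebra structure on the tensor
product `C ⊗_E D` of two `V`-dressed coalgebras:
`Δ(c ⊗_E d) = Σ (c₍₁₎ ⊗_E d₍₁₎) ⊗ (c₍₂₎ ⊗_E d₍₂₎)`,
`ε(c ⊗_E d) = Σ_ν ε(cν) ε(νd)`, and the `E`-actions through the outer factors. -/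
def IsDTensorStruct {C D : Type} [AddCommGroup C] [Module K C]
    [AddCommGroup D] [Module K D] (DC : DressedStruct K V C) (DD : DressedStruct K V D)
    (DT : DressedStruct K V (DTensor K V DC.toEBim DD.toEBim)) : Prop :=
  (∀ (c : C) (d : D),
    DT.comul ((dbal K V DC.toEBim DD.toEBim).mkQ (c ⊗ₜ[K] d)) =
      (TensorProduct.map (dbal K V DC.toEBim DD.toEBim).mkQ
          (dbal K V DC.toEBim DD.toEBim).mkQ)
        ((TensorProduct.tensorTensorTensorComm K C C D D)
          (DC.comul c ⊗ₜ[K] DD.comul d))) ∧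
  (∀ (c : C) (d : D),
    DT.counit ((dbal K V DC.toEBim DD.toEBim).mkQ (c ⊗ₜ[K] d)) =
      ∑ n : V, DC.counit (DC.toEBim.pR n c) * DD.counit (DD.toEBim.pL n d)) ∧
  (∀ (p : V × V) (c : C) (d : D),
    DT.eL p ((dbal K V DC.toEBim DD.toEBim).mkQ (c ⊗ₜ[K] d)) =
      (dbal K V DC.toEBim DD.toEBim).mkQ ((DC.eL p c) ⊗ₜ[K] d)) ∧
  (∀ (p : V × V) (c : C) (d : D),
    DT.eR p ((dbal K V DC.toEBim DD.toEBim).mkQ (c ⊗ₜ[K] d)) =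
      (dbal K V DC.toEBim DD.toEBim).mkQ (c ⊗ₜ[K] (DD.eR p d)))

/-- The `V`-dressed coalgebra `E` itself: the defining formulas on the
canonical basis `{λ̊μ}` of `E = V × V → K`. -/
def IsEStruct (D : DressedStruct K V (V × V → K)) : Prop :=
  (∀ p : V × V, D.comul (Pi.single p 1) =
    ∑ n : V, (Pi.single (p.1, n) 1 : V × V → K) ⊗ₜ[K] (Pi.single (n, p.2) 1 : V × V → K)) ∧
  (∀ p : V × V, D.counit (Pi.single p 1) = if p.1 = p.2 then 1 else 0) ∧
  (∀ p q : V × V, D.eL p (Pi.single q 1) =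
    if p = q then (Pi.single q 1 : V × V → K) else 0) ∧
  (∀ p q : V × V, D.eR p (Pi.single q 1) =
    if p = q then (Pi.single q 1 : V × V → K) else 0)

end Dressed
section BmdR

open CategoryTheory

variable (K : Type) [Field K] (V : Type) [Fintype V] [DecidableEq V]

/-- A finite-dimensional `R`-bimodule, where `R = R_V` is the `K`-span of the
orthogonal idempotents `λ ∈ V`: a finite-dimensional `K`-vector space with
commuting unital left and right actions of `R`, encoded by the action
operators of the idempotents. -/
structure Bmd where
  M : Type
  [acg : AddCommGroup M]
  [mod : Module K M]
  [fd : FiniteDimensional K M]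
  /-- left action of `λ ∈ V` -/
  aL : V → M →ₗ[K] M
  /-- right action of `λ ∈ V` -/
  aR : V → M →ₗ[K] M
  aL_orth : ∀ l m : V, aL l ∘ₗ aL m = if l = m then aL l else 0
  aR_orth : ∀ l m : V, aR l ∘ₗ aR m = if l = m then aR l else 0
  aLR_comm : ∀ l m : V, aL l ∘ₗ aR m = aR m ∘ₗ aL l
  sum_aL : ∑ l : V, aL l = LinearMap.id
  sum_aR : ∑ l : V, aR l = LinearMap.id

attribute [instance] Bmd.acg Bmd.mod Bmd.fd

variable {K V}

/-- Maps of `R`-bimodules. -/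
def IsBmdMap (M N : Bmd K V) (f : M.M →ₗ[K] N.M) : Prop :=
  (∀ l : V, f ∘ₗ M.aL l = N.aL l ∘ₗ f) ∧ (∀ l : V, f ∘ₗ M.aR l = N.aR l ∘ₗ f)

variable (K V)

/-- The category `bmd(R)` of finite-dimensional `R`-bimodules. -/
noncomputable instance Bmd.category : Category (Bmd K V) where
  Hom M N := {f : M.M →ₗ[K] N.M // IsBmdMap M N f}
  id M := ⟨LinearMap.id, fun l => by simp, fun l => by simp⟩
  comp {M N P} f g := ⟨g.1 ∘ₗ f.1, by
    obtain ⟨fl, fr⟩ := f.2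
    obtain ⟨gl, gr⟩ := g.2
    constructor
    · intro l
      rw [LinearMap.comp_assoc, fl l, ← LinearMap.comp_assoc, gl l, LinearMap.comp_assoc]
    · intro l
      rw [LinearMap.comp_assoc, fr l, ← LinearMap.comp_assoc, gr l, LinearMap.comp_assoc]⟩
  id_comp f := Subtype.ext (LinearMap.comp_id f.1)
  comp_id f := Subtype.ext (LinearMap.id_comp f.1)
  assoc f g h := Subtype.ext (LinearMap.comp_assoc f.1 g.1 h.1).symm

variable {K V}

@[simp] lemma Bmd.id_coe (M : Bmd K V) : (𝟙 M : M ⟶ M).1 = LinearMap.id := rfl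

@[simp] lemma Bmd.comp_coe {M N P : Bmd K V} (f : M ⟶ N) (g : N ⟶ P) :
    (f ≫ g).1 = g.1 ∘ₗ f.1 := rfl

end BmdR

section Coend

open CategoryTheory

variable (K : Type) [Field K] (V : Type) [Fintype V] [DecidableEq V]
variable {C : Type} [SmallCategory C] (Ω : C ⥤ Bmd K V)

/-- The component `Ω(X)* ⊗ Ω(X)` of the functor whose coend is `C(Ω)`. -/
abbrev dMc (X : C) : Type := ((Ω.obj X).M →ₗ[K] K) ⊗[K] (Ω.obj X).M

/-- The free vector space on the pairs `(m*, m)` with `m* ∈ Ω(X)*`, `m ∈ Ω(X)`,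
`X ∈ ob C`. -/
abbrev PreCoend : Type :=
  (Σ X : C, ((Ω.obj X).M →ₗ[K] K) × (Ω.obj X).M) →₀ K

/-- The relations presenting the coend `C(Ω)` of `Ω* ⊗ Ω` as a quotient of the
free vector space `PreCoend`: bilinearity in `(m*, m)` and the coend
(dinaturality) relations `(f*(m*)) ⊗ m ∼ m* ⊗ f(m)`. -/
noncomputable def coendRel : Submodule K (PreCoend K V Ω) :=
  Submodule.span K
    ({z | ∃ (X : C) (g g' : (Ω.obj X).M →ₗ[K] K) (m : (Ω.obj X).M),
        z = Finsupp.single ⟨X, g + g', m⟩ (1 : K) -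
            Finsupp.single ⟨X, g, m⟩ 1 - Finsupp.single ⟨X, g', m⟩ 1} ∪
     {z | ∃ (X : C) (c : K) (g : (Ω.obj X).M →ₗ[K] K) (m : (Ω.obj X).M),
        z = Finsupp.single ⟨X, c • g, m⟩ (1 : K) -
            c • Finsupp.single ⟨X, g, m⟩ 1} ∪
     {z | ∃ (X : C) (g : (Ω.obj X).M →ₗ[K] K) (m m' : (Ω.obj X).M),
        z = Finsupp.single ⟨X, g, m + m'⟩ (1 : K) -
            Finsupp.single ⟨X, g, m⟩ 1 - Finsupp.single ⟨X, g, m'⟩ 1} ∪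
     {z | ∃ (X : C) (c : K) (g : (Ω.obj X).M →ₗ[K] K) (m : (Ω.obj X).M),
        z = Finsupp.single ⟨X, g, c • m⟩ (1 : K) -
            c • Finsupp.single ⟨X, g, m⟩ 1} ∪
     {z | ∃ (X Y : C) (f : X ⟶ Y) (g : (Ω.obj Y).M →ₗ[K] K) (m : (Ω.obj X).M),
        z = Finsupp.single ⟨X, g ∘ₗ (Ω.map f).1, m⟩ (1 : K) -
            Finsupp.single ⟨Y, g, (Ω.map f).1 m⟩ 1})

/-- The underlying vector space of the coend `C(Ω)` of `Ω* ⊗ Ω`. -/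
noncomputable abbrev CoendT : Type := PreCoend K V Ω ⧸ coendRel K V Ω

/-- The universal dinatural transformation
`κ_X : Ω(X)* ⊗ Ω(X) → C(Ω)`. -/
noncomputable def coendK (X : C) : dMc K V Ω X →ₗ[K] CoendT K V Ω :=
  TensorProduct.lift (LinearMap.mk₂ K
    (fun g m => (coendRel K V Ω).mkQ (Finsupp.single ⟨X, g, m⟩ (1 : K)))
    (fun g g' m => by
      beta_reduce
      rw [← map_add, Submodule.mkQ_apply, Submodule.mkQ_apply, Submodule.Quotient.eq]
      exact Submodule.subset_span (Or.inl (Or.inl (Or.inl (Or.inl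
        ⟨X, g, g', m, (sub_sub _ _ _).symm⟩)))))
    (fun c g m => by
      beta_reduce
      rw [← map_smul, Submodule.mkQ_apply, Submodule.mkQ_apply, Submodule.Quotient.eq]
      exact Submodule.subset_span (Or.inl (Or.inl (Or.inl (Or.inr ⟨X, c, g, m, rfl⟩)))))
    (fun g m m' => by
      beta_reduce
      rw [← map_add, Submodule.mkQ_apply, Submodule.mkQ_apply, Submodule.Quotient.eq]
      exact Submodule.subset_span (Or.inl (Or.inl (Or.inr
        ⟨X, g, m, m', (sub_sub _ _ _).symm⟩))))
    (fun c g m => by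
      beta_reduce
      rw [← map_smul, Submodule.mkQ_apply, Submodule.mkQ_apply, Submodule.Quotient.eq]
      exact Submodule.subset_span (Or.inl (Or.inr ⟨X, c, g, m, rfl⟩))))

/-- The coalgebra comultiplication on `C(Ω)` is determined by
`Δ(κ_X(m* ⊗ m)) = Σ_j κ_X(m* ⊗ m_j) ⊗ κ_X(m^j ⊗ m)` for any finite basis
`{m_j}` of `Ω(X)` with dual basis `{m^j}`. -/
def CoendComulSpec (comul : CoendT K V Ω →ₗ[K] CoendT K V Ω ⊗[K] CoendT K V Ω) : Prop :=
  ∀ (X : C) (ι : Type) (_ : Fintype ι) (b : Module.Basis ι K (Ω.obj X).M)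
    (g : (Ω.obj X).M →ₗ[K] K) (m : (Ω.obj X).M),
    comul (coendK K V Ω X (g ⊗ₜ[K] m)) =
      ∑ j : ι, (coendK K V Ω X (g ⊗ₜ[K] b j)) ⊗ₜ[K] (coendK K V Ω X (b.coord j ⊗ₜ[K] m))

/-- The counit of `C(Ω)` is determined by `ε(κ_X(m* ⊗ m)) = ⟨m*, m⟩`. -/
def CoendCounitSpec (counit : CoendT K V Ω →ₗ[K] K) : Prop :=
  ∀ (X : C) (g : (Ω.obj X).M →ₗ[K] K) (m : (Ω.obj X).M),
    counit (coendK K V Ω X (g ⊗ₜ[K] m)) = g m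

/-- The `E`-bimodule structure of `C(Ω)`, induced by
`λ̊μ (n ⊗ m) λ̊'μ' = λ̊ n λ̊' ⊗ μ m μ'` on `Ω(X)* ⊗ Ω(X)`. -/
def CoendBimSpec (B : EBim K V (CoendT K V Ω)) : Prop :=
  ∀ (p : V × V) (X : C) (g : (Ω.obj X).M →ₗ[K] K) (m : (Ω.obj X).M),
    B.eL p (coendK K V Ω X (g ⊗ₜ[K] m)) =
      coendK K V Ω X ((g ∘ₗ (Ω.obj X).aL p.1) ⊗ₜ[K] ((Ω.obj X).aL p.2 m)) ∧
    B.eR p (coendK K V Ω X (g ⊗ₜ[K] m)) =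
      coendK K V Ω X ((g ∘ₗ (Ω.obj X).aR p.1) ⊗ₜ[K] ((Ω.obj X).aR p.2 m))

/-- The full `V`-dressed coalgebra structure of the coend `C(Ω)`. -/
def CoendDressedSpec (D : DressedStruct K V (CoendT K V Ω)) : Prop :=
  CoendComulSpec K V Ω D.comul ∧ CoendCounitSpec K V Ω D.counit ∧
    CoendBimSpec K V Ω D.toEBim

/-- The right `C(Ω)`-comodule structure
`δ_X(m) = Σ_i m_i ⊗ κ_X(m^i ⊗ m)` on `Ω(X)`. -/
noncomputable def coendDelta (X : C) :
    (Ω.obj X).M →ₗ[K] (Ω.obj X).M ⊗[K] CoendT K V Ω :=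
  ∑ i, (TensorProduct.mk K (Ω.obj X).M (CoendT K V Ω)
      (Module.finBasis K (Ω.obj X).M i)) ∘ₗ coendK K V Ω X ∘ₗ
    (TensorProduct.mk K ((Ω.obj X).M →ₗ[K] K) (Ω.obj X).M
      ((Module.finBasis K (Ω.obj X).M).coord i))

end Coend

section CoendAux

open CategoryTheory

variable (K : Type) [Field K] (V : Type) [Fintype V] [DecidableEq V]
variable {C : Type} [SmallCategory C] (Ω : C ⥤ Bmd K V)

lemma coendK_tmul (X : C) (g : (Ω.obj X).M →ₗ[K] K) (m : (Ω.obj X).M) :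
    coendK K V Ω X (g ⊗ₜ[K] m) =
      (coendRel K V Ω).mkQ (Finsupp.single ⟨X, g, m⟩ (1 : K)) := by
  simp [coendK]

lemma coendK_dinat {X Y : C} (f : X ⟶ Y) (g : (Ω.obj Y).M →ₗ[K] K) (m : (Ω.obj X).M) :
    coendK K V Ω X ((g ∘ₗ (Ω.map f).1) ⊗ₜ[K] m) =
      coendK K V Ω Y (g ⊗ₜ[K] (Ω.map f).1 m) := by
  rw [coendK_tmul, coendK_tmul, Submodule.mkQ_apply, Submodule.mkQ_apply,
    Submodule.Quotient.eq]
  exact Submodule.subset_span (Set.mem_union_right _ ⟨X, Y, f, g, m, rfl⟩)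

lemma sum_apply_smul_coord {M : Type} [AddCommGroup M] [Module K M] {ι : Type}
    [Fintype ι] (b : Module.Basis ι K M) (f : M →ₗ[K] K) :
    ∑ j, f (b j) • b.coord j = f := by
  classical
  refine b.ext fun k => ?_
  simp [Module.Basis.coord_apply, Module.Basis.repr_self_apply]

/-- Conditions guaranteeing that a function on the generators of `PreCoend`
descends to the coend. -/
def CoendLiftOK {W : Type} [AddCommGroup W] [Module K W]
    (φ : (Σ X : C, ((Ω.obj X).M →ₗ[K] K) × (Ω.obj X).M) → W) : Prop :=
  (∀ (X : C) (g g' : (Ω.obj X).M →ₗ[K] K) (m : (Ω.obj X).M),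
      φ ⟨X, g + g', m⟩ = φ ⟨X, g, m⟩ + φ ⟨X, g', m⟩) ∧
  (∀ (X : C) (c : K) (g : (Ω.obj X).M →ₗ[K] K) (m : (Ω.obj X).M),
      φ ⟨X, c • g, m⟩ = c • φ ⟨X, g, m⟩) ∧
  (∀ (X : C) (g : (Ω.obj X).M →ₗ[K] K) (m m' : (Ω.obj X).M),
      φ ⟨X, g, m + m'⟩ = φ ⟨X, g, m⟩ + φ ⟨X, g, m'⟩) ∧
  (∀ (X : C) (c : K) (g : (Ω.obj X).M →ₗ[K] K) (m : (Ω.obj X).M),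
      φ ⟨X, g, c • m⟩ = c • φ ⟨X, g, m⟩) ∧
  (∀ (X Y : C) (f : X ⟶ Y) (g : (Ω.obj Y).M →ₗ[K] K) (m : (Ω.obj X).M),
      φ ⟨X, g ∘ₗ (Ω.map f).1, m⟩ = φ ⟨Y, g, (Ω.map f).1 m⟩)

noncomputable def coendLift {W : Type} [AddCommGroup W] [Module K W]
    (φ : (Σ X : C, ((Ω.obj X).M →ₗ[K] K) × (Ω.obj X).M) → W)
    (h : CoendLiftOK K V Ω φ) : CoendT K V Ω →ₗ[K] W :=
  (coendRel K V Ω).liftQ (Finsupp.linearCombination K φ) (by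
    rw [coendRel, Submodule.span_le]
    rintro z ((((⟨X, g, g', m, rfl⟩ | ⟨X, c, g, m, rfl⟩) | ⟨X, g, m, m', rfl⟩) |
      ⟨X, c, g, m, rfl⟩) | ⟨X, Y, f, g, m, rfl⟩) <;>
      simp [Finsupp.linearCombination_single,
        h.1, h.2.1, h.2.2.1, h.2.2.2.1, h.2.2.2.2])

lemma coendLift_apply {W : Type} [AddCommGroup W] [Module K W]
    (φ : (Σ X : C, ((Ω.obj X).M →ₗ[K] K) × (Ω.obj X).M) → W)
    (h : CoendLiftOK K V Ω φ) (X : C) (g : (Ω.obj X).M →ₗ[K] K) (m : (Ω.obj X).M) :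
    coendLift K V Ω φ h (coendK K V Ω X (g ⊗ₜ[K] m)) = φ ⟨X, g, m⟩ := by
  rw [coendK_tmul, coendLift, Submodule.mkQ_apply, Submodule.liftQ_apply,
    Finsupp.linearCombination_single, one_smul]

lemma coendT_hom_ext {W : Type} [AddCommGroup W] [Module K W]
    {f g : CoendT K V Ω →ₗ[K] W}
    (h : ∀ (X : C) (a : (Ω.obj X).M →ₗ[K] K) (m : (Ω.obj X).M),
      f (coendK K V Ω X (a ⊗ₜ[K] m)) = g (coendK K V Ω X (a ⊗ₜ[K] m))) : f = g := by
  refine Submodule.linearMap_qext _ (Finsupp.lhom_ext fun s k => ?_)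
  obtain ⟨X, a, m⟩ := s
  have hs : (Finsupp.single (⟨X, a, m⟩ : Σ X : C, ((Ω.obj X).M →ₗ[K] K) × (Ω.obj X).M) k)
      = k • Finsupp.single ⟨X, a, m⟩ (1 : K) := by
    rw [Finsupp.smul_single, smul_eq_mul, mul_one]
  simp only [LinearMap.comp_apply, hs, map_smul]
  rw [← coendK_tmul K V Ω X a m, h]

lemma coendK_sum_smul_left (X : C) {ι : Type} [Fintype ι] (r : ι → K)
    (h : ι → ((Ω.obj X).M →ₗ[K] K)) (m : (Ω.obj X).M) :
    ∑ j, r j • coendK K V Ω X (h j ⊗ₜ[K] m) =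
      coendK K V Ω X ((∑ j, r j • h j) ⊗ₜ[K] m) := by
  rw [TensorProduct.sum_tmul, map_sum]
  refine Finset.sum_congr rfl fun j _ => ?_
  rw [← TensorProduct.smul_tmul', map_smul]

lemma coendK_sum_smul_right (X : C) {ι : Type} [Fintype ι] (r : ι → K)
    (g : (Ω.obj X).M →ₗ[K] K) (v : ι → (Ω.obj X).M) :
    ∑ j, r j • coendK K V Ω X (g ⊗ₜ[K] v j) =
      coendK K V Ω X (g ⊗ₜ[K] (∑ j, r j • v j)) := by
  rw [TensorProduct.tmul_sum, map_sum]
  refine Finset.sum_congr rfl fun j _ => ?_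
  rw [TensorProduct.tmul_smul, map_smul]

/-- The counit of the coend. -/
noncomputable def dCounit : CoendT K V Ω →ₗ[K] K :=
  coendLift K V Ω (fun s => s.2.1 s.2.2)
    ⟨fun _ _ _ _ => rfl, fun _ _ _ _ => rfl,
     fun _ g m m' => map_add g m m', fun _ c g m => map_smul g c m,
     fun _ _ _ _ _ => rfl⟩

@[simp] lemma dCounit_coendK (X : C) (g : (Ω.obj X).M →ₗ[K] K) (m : (Ω.obj X).M) :
    dCounit K V Ω (coendK K V Ω X (g ⊗ₜ[K] m)) = g m :=
  coendLift_apply K V Ω _ _ X g m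

/-- The left `E`-action on the coend. -/
noncomputable def dEL (p : V × V) : CoendT K V Ω →ₗ[K] CoendT K V Ω :=
  coendLift K V Ω
    (fun s => coendK K V Ω s.1
      ((s.2.1 ∘ₗ (Ω.obj s.1).aL p.1) ⊗ₜ[K] ((Ω.obj s.1).aL p.2 s.2.2)))
    ⟨fun X g g' m => by
      dsimp only
      rw [LinearMap.add_comp, TensorProduct.add_tmul, map_add],
     fun X c g m => by
      dsimp only
      rw [LinearMap.smul_comp, ← TensorProduct.smul_tmul', map_smul],
     fun X g m m' => by
      dsimp only
      rw [map_add, TensorProduct.tmul_add, map_add],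
     fun X c g m => by
      dsimp only
      rw [map_smul, TensorProduct.tmul_smul, map_smul],
     fun X Y f g m => by
      dsimp only
      have h1 : (g ∘ₗ (Ω.map f).1) ∘ₗ (Ω.obj X).aL p.1
          = (g ∘ₗ (Ω.obj Y).aL p.1) ∘ₗ (Ω.map f).1 := by
        rw [LinearMap.comp_assoc, (Ω.map f).2.1 p.1, ← LinearMap.comp_assoc]
      have h3 : (Ω.map f).1 ((Ω.obj X).aL p.2 m) = (Ω.obj Y).aL p.2 ((Ω.map f).1 m) :=
        LinearMap.congr_fun ((Ω.map f).2.1 p.2) m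
      rw [h1, coendK_dinat, h3]⟩

/-- The right `E`-action on the coend. -/
noncomputable def dER (p : V × V) : CoendT K V Ω →ₗ[K] CoendT K V Ω :=
  coendLift K V Ω
    (fun s => coendK K V Ω s.1
      ((s.2.1 ∘ₗ (Ω.obj s.1).aR p.1) ⊗ₜ[K] ((Ω.obj s.1).aR p.2 s.2.2)))
    ⟨fun X g g' m => by
      dsimp only
      rw [LinearMap.add_comp, TensorProduct.add_tmul, map_add],
     fun X c g m => by
      dsimp only
      rw [LinearMap.smul_comp, ← TensorProduct.smul_tmul', map_smul],
     fun X g m m' => by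
      dsimp only
      rw [map_add, TensorProduct.tmul_add, map_add],
     fun X c g m => by
      dsimp only
      rw [map_smul, TensorProduct.tmul_smul, map_smul],
     fun X Y f g m => by
      dsimp only
      have h1 : (g ∘ₗ (Ω.map f).1) ∘ₗ (Ω.obj X).aR p.1
          = (g ∘ₗ (Ω.obj Y).aR p.1) ∘ₗ (Ω.map f).1 := by
        rw [LinearMap.comp_assoc, (Ω.map f).2.2 p.1, ← LinearMap.comp_assoc]
      have h3 : (Ω.map f).1 ((Ω.obj X).aR p.2 m) = (Ω.obj Y).aR p.2 ((Ω.map f).1 m) :=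
        LinearMap.congr_fun ((Ω.map f).2.2 p.2) m
      rw [h1, coendK_dinat, h3]⟩

@[simp] lemma dEL_coendK (p : V × V) (X : C) (g : (Ω.obj X).M →ₗ[K] K)
    (m : (Ω.obj X).M) :
    dEL K V Ω p (coendK K V Ω X (g ⊗ₜ[K] m)) =
      coendK K V Ω X ((g ∘ₗ (Ω.obj X).aL p.1) ⊗ₜ[K] ((Ω.obj X).aL p.2 m)) :=
  coendLift_apply K V Ω _ _ X g m

@[simp] lemma dER_coendK (p : V × V) (X : C) (g : (Ω.obj X).M →ₗ[K] K)
    (m : (Ω.obj X).M) :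
    dER K V Ω p (coendK K V Ω X (g ⊗ₜ[K] m)) =
      coendK K V Ω X ((g ∘ₗ (Ω.obj X).aR p.1) ⊗ₜ[K] ((Ω.obj X).aR p.2 m)) :=
  coendLift_apply K V Ω _ _ X g m

/-- The key expansion lemma allowing change of basis in the comultiplication. -/
lemma coend_core {X Y : C} (A : (Ω.obj X).M →ₗ[K] (Ω.obj Y).M)
    {ι ι' : Type} [Fintype ι] [Fintype ι']
    (b : Module.Basis ι K (Ω.obj X).M) (c : Module.Basis ι' K (Ω.obj Y).M)
    (g : (Ω.obj Y).M →ₗ[K] K) (m : (Ω.obj X).M) :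
    ∑ j, coendK K V Ω Y (g ⊗ₜ[K] A (b j)) ⊗ₜ[K] coendK K V Ω X (b.coord j ⊗ₜ[K] m)
      = ∑ i, coendK K V Ω Y (g ⊗ₜ[K] c i) ⊗ₜ[K]
          coendK K V Ω X ((c.coord i ∘ₗ A) ⊗ₜ[K] m) := by
  have step1 : ∀ j, coendK K V Ω Y (g ⊗ₜ[K] A (b j))
      = ∑ i, c.coord i (A (b j)) • coendK K V Ω Y (g ⊗ₜ[K] c i) := by
    intro j
    conv_lhs => rw [← c.sum_repr (A (b j))]
    simp only [TensorProduct.tmul_sum, TensorProduct.tmul_smul, map_sum, map_smul, Module.Basis.coord_apply]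
  calc
    ∑ j, coendK K V Ω Y (g ⊗ₜ[K] A (b j)) ⊗ₜ[K] coendK K V Ω X (b.coord j ⊗ₜ[K] m)
        = ∑ j, ∑ i, coendK K V Ω Y (g ⊗ₜ[K] c i) ⊗ₜ[K]
            (c.coord i (A (b j)) • coendK K V Ω X (b.coord j ⊗ₜ[K] m)) := by
          refine Finset.sum_congr rfl fun j _ => ?_
          rw [step1 j, TensorProduct.sum_tmul]
          refine Finset.sum_congr rfl fun i _ => ?_
          rw [TensorProduct.smul_tmul]
    _ = ∑ i, coendK K V Ω Y (g ⊗ₜ[K] c i) ⊗ₜ[K]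
            coendK K V Ω X ((∑ j, (c.coord i) (A (b j)) • b.coord j) ⊗ₜ[K] m) := by
          rw [Finset.sum_comm]
          refine Finset.sum_congr rfl fun i _ => ?_
          rw [← TensorProduct.tmul_sum]
          congr 1
          exact coendK_sum_smul_left K V Ω X _ _ m
    _ = ∑ i, coendK K V Ω Y (g ⊗ₜ[K] c i) ⊗ₜ[K]
            coendK K V Ω X ((c.coord i ∘ₗ A) ⊗ₜ[K] m) := by
          refine Finset.sum_congr rfl fun i _ => ?_
          have hf : (∑ j, (c.coord i) (A (b j)) • b.coord j) = c.coord i ∘ₗ A := by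
            simpa only [LinearMap.comp_apply] using sum_apply_smul_coord K b (c.coord i ∘ₗ A)
          rw [hf]

/-- The comultiplication of the coend. -/
noncomputable def dComul : CoendT K V Ω →ₗ[K] CoendT K V Ω ⊗[K] CoendT K V Ω :=
  coendLift K V Ω
    (fun s => ∑ j, coendK K V Ω s.1 (s.2.1 ⊗ₜ[K] Module.finBasis K (Ω.obj s.1).M j)
        ⊗ₜ[K] coendK K V Ω s.1 ((Module.finBasis K (Ω.obj s.1).M).coord j ⊗ₜ[K] s.2.2))
    ⟨fun X g g' m => by
        rw [← Finset.sum_add_distrib]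
        simp [TensorProduct.add_tmul],
     fun X c g m => by
        dsimp only
        rw [Finset.smul_sum]
        refine Finset.sum_congr rfl fun j _ => ?_
        rw [← TensorProduct.smul_tmul', map_smul, TensorProduct.smul_tmul'],
     fun X g m m' => by
        rw [← Finset.sum_add_distrib]
        simp [TensorProduct.tmul_add],
     fun X c g m => by
        rw [Finset.smul_sum]
        simp [TensorProduct.tmul_smul],
     fun X Y f g m => by
        have h0 : ∀ j, coendK K V Ω X ((g ∘ₗ (Ω.map f).1) ⊗ₜ[K]
            Module.finBasis K (Ω.obj X).M j)
            = coendK K V Ω Y (g ⊗ₜ[K] (Ω.map f).1 (Module.finBasis K (Ω.obj X).M j)) :=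
          fun j => coendK_dinat K V Ω f g _
        simp_rw [h0]
        rw [coend_core K V Ω (Ω.map f).1 (Module.finBasis K (Ω.obj X).M)
          (Module.finBasis K (Ω.obj Y).M) g m]
        simp_rw [coendK_dinat]⟩

lemma dComul_coendK (X : C) (g : (Ω.obj X).M →ₗ[K] K) (m : (Ω.obj X).M) :
    dComul K V Ω (coendK K V Ω X (g ⊗ₜ[K] m)) =
      ∑ j, coendK K V Ω X (g ⊗ₜ[K] Module.finBasis K (Ω.obj X).M j)
        ⊗ₜ[K] coendK K V Ω X ((Module.finBasis K (Ω.obj X).M).coord j ⊗ₜ[K] m) :=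
  coendLift_apply K V Ω _ _ X g m

lemma dComul_coendK_basis (X : C) {ι : Type} [Fintype ι] (b : Module.Basis ι K (Ω.obj X).M)
    (g : (Ω.obj X).M →ₗ[K] K) (m : (Ω.obj X).M) :
    dComul K V Ω (coendK K V Ω X (g ⊗ₜ[K] m)) =
      ∑ j, coendK K V Ω X (g ⊗ₜ[K] b j)
        ⊗ₜ[K] coendK K V Ω X (b.coord j ⊗ₜ[K] m) := by
  rw [dComul_coendK]
  have h := coend_core K V Ω (LinearMap.id (R := K) (M := (Ω.obj X).M))
    (Module.finBasis K (Ω.obj X).M) b g m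
  simpa [LinearMap.comp_id] using h

/-- The `E`-bimodule structure on the coend. -/
noncomputable def dBim : EBim K V (CoendT K V Ω) where
  eL := dEL K V Ω
  eR := dER K V Ω
  eL_orth p q := by
    refine coendT_hom_ext K V Ω fun X g m => ?_
    simp only [LinearMap.comp_apply, dEL_coendK]
    rw [LinearMap.comp_assoc, (Ω.obj X).aL_orth q.1 p.1,
      show (Ω.obj X).aL p.2 ((Ω.obj X).aL q.2 m)
        = ((Ω.obj X).aL p.2 ∘ₗ (Ω.obj X).aL q.2) m from rfl,
      (Ω.obj X).aL_orth p.2 q.2]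
    by_cases h : p = q
    · subst h
      simp
    · rw [if_neg h]
      by_cases h1 : q.1 = p.1
      · have h2 : p.2 ≠ q.2 := fun hc => h (Prod.ext h1.symm hc)
        rw [if_neg h2]
        simp
      · rw [if_neg h1]
        simp
  eR_orth p q := by
    refine coendT_hom_ext K V Ω fun X g m => ?_
    simp only [LinearMap.comp_apply, dER_coendK]
    rw [LinearMap.comp_assoc, (Ω.obj X).aR_orth q.1 p.1,
      show (Ω.obj X).aR p.2 ((Ω.obj X).aR q.2 m)
        = ((Ω.obj X).aR p.2 ∘ₗ (Ω.obj X).aR q.2) m from rfl,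
      (Ω.obj X).aR_orth p.2 q.2]
    by_cases h : p = q
    · subst h
      simp
    · rw [if_neg h]
      by_cases h1 : q.1 = p.1
      · have h2 : p.2 ≠ q.2 := fun hc => h (Prod.ext h1.symm hc)
        rw [if_neg h2]
        simp
      · rw [if_neg h1]
        simp
  eLR_comm p q := by
    refine coendT_hom_ext K V Ω fun X g m => ?_
    simp only [LinearMap.comp_apply, dEL_coendK, dER_coendK]
    rw [LinearMap.comp_assoc, LinearMap.comp_assoc, (Ω.obj X).aLR_comm p.1 q.1,
      show (Ω.obj X).aL p.2 ((Ω.obj X).aR q.2 m)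
        = (Ω.obj X).aR q.2 ((Ω.obj X).aL p.2 m) from
        LinearMap.congr_fun ((Ω.obj X).aLR_comm p.2 q.2) m]
  sum_eL := by
    refine coendT_hom_ext K V Ω fun X g m => ?_
    rw [LinearMap.sum_apply]
    simp only [dEL_coendK, LinearMap.id_apply]
    rw [Fintype.sum_prod_type]
    have hm : ∀ l : V, ∑ m' : V, coendK K V Ω X
        ((g ∘ₗ (Ω.obj X).aL l) ⊗ₜ[K] (Ω.obj X).aL m' m)
        = coendK K V Ω X ((g ∘ₗ (Ω.obj X).aL l) ⊗ₜ[K] m) := by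
      intro l
      rw [← map_sum, ← TensorProduct.tmul_sum,
        show (∑ m' : V, (Ω.obj X).aL m' m) = m from by
          rw [← LinearMap.sum_apply, (Ω.obj X).sum_aL, LinearMap.id_apply]]
    simp_rw [hm]
    rw [← map_sum, ← TensorProduct.sum_tmul,
      show (∑ l : V, g ∘ₗ (Ω.obj X).aL l) = g from by
        refine LinearMap.ext fun x => ?_
        rw [LinearMap.sum_apply]
        simp only [LinearMap.comp_apply]
        rw [← map_sum, ← LinearMap.sum_apply, (Ω.obj X).sum_aL, LinearMap.id_apply]]
  sum_eR := by
    refine coendT_hom_ext K V Ω fun X g m => ?_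
    rw [LinearMap.sum_apply]
    simp only [dER_coendK, LinearMap.id_apply]
    rw [Fintype.sum_prod_type]
    have hm : ∀ l : V, ∑ m' : V, coendK K V Ω X
        ((g ∘ₗ (Ω.obj X).aR l) ⊗ₜ[K] (Ω.obj X).aR m' m)
        = coendK K V Ω X ((g ∘ₗ (Ω.obj X).aR l) ⊗ₜ[K] m) := by
      intro l
      rw [← map_sum, ← TensorProduct.tmul_sum,
        show (∑ m' : V, (Ω.obj X).aR m' m) = m from by
          rw [← LinearMap.sum_apply, (Ω.obj X).sum_aR, LinearMap.id_apply]]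
    simp_rw [hm]
    rw [← map_sum, ← TensorProduct.sum_tmul,
      show (∑ l : V, g ∘ₗ (Ω.obj X).aR l) = g from by
        refine LinearMap.ext fun x => ?_
        rw [LinearMap.sum_apply]
        simp only [LinearMap.comp_apply]
        rw [← map_sum, ← LinearMap.sum_apply, (Ω.obj X).sum_aR, LinearMap.id_apply]]

lemma dBim_oL_coendK (l : V) (X : C) (g : (Ω.obj X).M →ₗ[K] K) (m : (Ω.obj X).M) :
    (dBim K V Ω).oL l (coendK K V Ω X (g ⊗ₜ[K] m)) =
      coendK K V Ω X ((g ∘ₗ (Ω.obj X).aL l) ⊗ₜ[K] m) := by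
  rw [EBim.oL, LinearMap.sum_apply]
  have : ∀ m' : V, (dBim K V Ω).eL (l, m') (coendK K V Ω X (g ⊗ₜ[K] m))
      = coendK K V Ω X ((g ∘ₗ (Ω.obj X).aL l) ⊗ₜ[K] (Ω.obj X).aL m' m) :=
    fun m' => dEL_coendK K V Ω (l, m') X g m
  simp_rw [this]
  rw [← map_sum, ← TensorProduct.tmul_sum,
    show (∑ m' : V, (Ω.obj X).aL m' m) = m from by
      rw [← LinearMap.sum_apply, (Ω.obj X).sum_aL, LinearMap.id_apply]]

lemma dBim_oR_coendK (l : V) (X : C) (g : (Ω.obj X).M →ₗ[K] K) (m : (Ω.obj X).M) :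
    (dBim K V Ω).oR l (coendK K V Ω X (g ⊗ₜ[K] m)) =
      coendK K V Ω X ((g ∘ₗ (Ω.obj X).aR l) ⊗ₜ[K] m) := by
  rw [EBim.oR, LinearMap.sum_apply]
  have : ∀ m' : V, (dBim K V Ω).eR (l, m') (coendK K V Ω X (g ⊗ₜ[K] m))
      = coendK K V Ω X ((g ∘ₗ (Ω.obj X).aR l) ⊗ₜ[K] (Ω.obj X).aR m' m) :=
    fun m' => dER_coendK K V Ω (l, m') X g m
  simp_rw [this]
  rw [← map_sum, ← TensorProduct.tmul_sum,
    show (∑ m' : V, (Ω.obj X).aR m' m) = m from by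
      rw [← LinearMap.sum_apply, (Ω.obj X).sum_aR, LinearMap.id_apply]]

lemma dBim_pL_coendK (m' : V) (X : C) (g : (Ω.obj X).M →ₗ[K] K) (m : (Ω.obj X).M) :
    (dBim K V Ω).pL m' (coendK K V Ω X (g ⊗ₜ[K] m)) =
      coendK K V Ω X (g ⊗ₜ[K] (Ω.obj X).aL m' m) := by
  rw [EBim.pL, LinearMap.sum_apply]
  have : ∀ l : V, (dBim K V Ω).eL (l, m') (coendK K V Ω X (g ⊗ₜ[K] m))
      = coendK K V Ω X ((g ∘ₗ (Ω.obj X).aL l) ⊗ₜ[K] (Ω.obj X).aL m' m) :=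
    fun l => dEL_coendK K V Ω (l, m') X g m
  simp_rw [this]
  rw [← map_sum, ← TensorProduct.sum_tmul,
    show (∑ l : V, g ∘ₗ (Ω.obj X).aL l) = g from by
      refine LinearMap.ext fun x => ?_
      rw [LinearMap.sum_apply]
      simp only [LinearMap.comp_apply]
      rw [← map_sum, ← LinearMap.sum_apply, (Ω.obj X).sum_aL, LinearMap.id_apply]]

lemma dBim_pR_coendK (m' : V) (X : C) (g : (Ω.obj X).M →ₗ[K] K) (m : (Ω.obj X).M) :
    (dBim K V Ω).pR m' (coendK K V Ω X (g ⊗ₜ[K] m)) =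
      coendK K V Ω X (g ⊗ₜ[K] (Ω.obj X).aR m' m) := by
  rw [EBim.pR, LinearMap.sum_apply]
  have : ∀ l : V, (dBim K V Ω).eR (l, m') (coendK K V Ω X (g ⊗ₜ[K] m))
      = coendK K V Ω X ((g ∘ₗ (Ω.obj X).aR l) ⊗ₜ[K] (Ω.obj X).aR m' m) :=
    fun l => dER_coendK K V Ω (l, m') X g m
  simp_rw [this]
  rw [← map_sum, ← TensorProduct.sum_tmul,
    show (∑ l : V, g ∘ₗ (Ω.obj X).aR l) = g from by
      refine LinearMap.ext fun x => ?_
      rw [LinearMap.sum_apply]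
      simp only [LinearMap.comp_apply]
      rw [← map_sum, ← LinearMap.sum_apply, (Ω.obj X).sum_aR, LinearMap.id_apply]]

/-- The `V`-dressed coalgebra structure on the coend. -/
noncomputable def dStruct : DressedStruct K V (CoendT K V Ω) where
  toEBim := dBim K V Ω
  comul := dComul K V Ω
  counit := dCounit K V Ω
  coassoc c := by
    have h : (TensorProduct.assoc K (CoendT K V Ω) (CoendT K V Ω) (CoendT K V Ω)).toLinearMap
          ∘ₗ TensorProduct.map (dComul K V Ω) LinearMap.id ∘ₗ dComul K V Ω
        = TensorProduct.map LinearMap.id (dComul K V Ω) ∘ₗ dComul K V Ω := by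
      refine coendT_hom_ext K V Ω fun X g m => ?_
      simp only [LinearMap.comp_apply, LinearEquiv.coe_coe, dComul_coendK, map_sum,
        TensorProduct.map_tmul, LinearMap.id_coe, id_eq, TensorProduct.sum_tmul,
        TensorProduct.tmul_sum, TensorProduct.assoc_tmul]
      rw [Finset.sum_comm]
    exact LinearMap.congr_fun h c
  counit_comul c := by
    have h : (TensorProduct.lid K (CoendT K V Ω)).toLinearMap
          ∘ₗ TensorProduct.map (dCounit K V Ω) LinearMap.id ∘ₗ dComul K V Ω
        = LinearMap.id := by
      refine coendT_hom_ext K V Ω fun X g m => ?_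
      simp only [LinearMap.comp_apply, LinearEquiv.coe_coe, dComul_coendK, map_sum,
        TensorProduct.map_tmul, LinearMap.id_coe, id_eq, dCounit_coendK,
        TensorProduct.lid_tmul]
      rw [coendK_sum_smul_left, sum_apply_smul_coord]
    exact LinearMap.congr_fun h c
  comul_counit c := by
    have h : (TensorProduct.rid K (CoendT K V Ω)).toLinearMap
          ∘ₗ TensorProduct.map LinearMap.id (dCounit K V Ω) ∘ₗ dComul K V Ω
        = LinearMap.id := by
      refine coendT_hom_ext K V Ω fun X g m => ?_
      simp only [LinearMap.comp_apply, LinearEquiv.coe_coe, dComul_coendK, map_sum,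
        TensorProduct.map_tmul, LinearMap.id_coe, id_eq, dCounit_coendK,
        TensorProduct.rid_tmul]
      rw [coendK_sum_smul_right]
      congr 1
      congr 1
      simp_rw [Module.Basis.coord_apply]
      exact Module.Basis.sum_repr _ m
    exact LinearMap.congr_fun h c
  comul_act p q c := by
    have h : dComul K V Ω ∘ₗ dEL K V Ω p ∘ₗ dER K V Ω q
        = TensorProduct.map ((dBim K V Ω).oL p.1 ∘ₗ (dBim K V Ω).oR q.1)
            ((dBim K V Ω).pL p.2 ∘ₗ (dBim K V Ω).pR q.2) ∘ₗ dComul K V Ω := by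
      refine coendT_hom_ext K V Ω fun X g m => ?_
      simp only [LinearMap.comp_apply, dEL_coendK, dER_coendK, dComul_coendK, map_sum,
        TensorProduct.map_tmul, dBim_pR_coendK, dBim_pL_coendK, dBim_oR_coendK,
        dBim_oL_coendK]
    exact LinearMap.congr_fun h c
  exch l m c := by
    have h : TensorProduct.map ((dBim K V Ω).pL l ∘ₗ (dBim K V Ω).pR m) LinearMap.id
          ∘ₗ dComul K V Ω
        = TensorProduct.map LinearMap.id ((dBim K V Ω).oL l ∘ₗ (dBim K V Ω).oR m)
          ∘ₗ dComul K V Ω := by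
      refine coendT_hom_ext K V Ω fun X g x => ?_
      simp only [LinearMap.comp_apply, dComul_coendK, map_sum, TensorProduct.map_tmul,
        LinearMap.id_coe, id_eq, dBim_pR_coendK, dBim_pL_coendK, dBim_oR_coendK,
        dBim_oL_coendK]
      have hA : ∀ j, coendK K V Ω X (g ⊗ₜ[K]
          (Ω.obj X).aL l ((Ω.obj X).aR m (Module.finBasis K (Ω.obj X).M j)))
          = coendK K V Ω X (g ⊗ₜ[K]
            ((Ω.obj X).aL l ∘ₗ (Ω.obj X).aR m) (Module.finBasis K (Ω.obj X).M j)) :=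
        fun j => rfl
      simp_rw [hA]
      rw [coend_core K V Ω ((Ω.obj X).aL l ∘ₗ (Ω.obj X).aR m)
        (Module.finBasis K (Ω.obj X).M) (Module.finBasis K (Ω.obj X).M) g x]
      refine Finset.sum_congr rfl fun i _ => ?_
      congr 2
      rw [LinearMap.comp_assoc, ← (Ω.obj X).aLR_comm l m, ← LinearMap.comp_assoc]
    exact LinearMap.congr_fun h c
  counit_act l m c := by
    have h : dCounit K V Ω ∘ₗ (dBim K V Ω).oL l ∘ₗ (dBim K V Ω).oR m
        = dCounit K V Ω ∘ₗ (dBim K V Ω).pL l ∘ₗ (dBim K V Ω).pR m := by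
      refine coendT_hom_ext K V Ω fun X g x => ?_
      simp only [LinearMap.comp_apply, dBim_oR_coendK, dBim_oL_coendK,
        dBim_pR_coendK, dBim_pL_coendK, dCounit_coendK]
      exact congrArg g (LinearMap.congr_fun ((Ω.obj X).aLR_comm l m) x).symm
    exact LinearMap.congr_fun h c

end CoendAux

section Stmt11

open CategoryTheory

variable (K : Type) [Field K] (V : Type) [Fintype V] [DecidableEq V]
variable {C : Type} [SmallCategory C] (Ω : C ⥤ Bmd K V)

/-- STATEMENT 11: for a category with `V`-face `(C, Ω)`, the coend `C(Ω)`,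
with its coalgebra structure and the `E`-bimodule structure coming from the
coend in `Bmd(E)`, is a `V`-dressed coalgebra. -/
theorem coend_dressed :
    ∃ D : DressedStruct K V (CoendT K V Ω), CoendDressedSpec K V Ω D := by
  refine ⟨dStruct K V Ω, ?_, ?_, ?_⟩
  · intro X ι inst b g m
    exact dComul_coendK_basis K V Ω X b g m
  · intro X g m
    exact dCounit_coendK K V Ω X g m
  · intro p X g m
    exact ⟨dEL_coendK K V Ω p X g m, dER_coendK K V Ω p X g m⟩

end Stmt11
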